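/- For n ≥ 2, g(n, n−1) = n−2, where g(n,k) is the maximum over Boolean functions f in n variables of the minimum algebraic degree of f restricted to a k-dimensional flat of F_2^n. -/

import Mathlib

open scoped Classical

noncomputable section

/-- Boolean functions in `n` variables. -/
abbrev BF (n : ℕ) := (Fin n → ZMod 2) → ZMod 2

/-- `A` is a `k`-dimensional flat (coset of a `k`-dimensional linear subspace) of `𝔽₂ⁿ`. -/
def IsFlat {n : ℕ} (A : Set (Fin n → ZMod 2)) (k : ℕ) : Prop :=
  ∃ (W : Submodule (ZMod 2) (Fin n → ZMod 2)) (v : Fin n → ZMod 2),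
    Module.finrank (ZMod 2) W = k ∧ A = (fun w => v + w) '' (W : Set (Fin n → ZMod 2))

/-- The sum (parity) of `f` over a subset of `𝔽₂ⁿ`. -/
def flatSum {n : ℕ} (f : BF n) (A : Set (Fin n → ZMod 2)) : ZMod 2 :=
  ∑ x ∈ A.toFinite.toFinset, f x

/-- The restriction of `f` to `A` has algebraic degree at most `d`:
by the standard parity criterion, this holds iff the sum of `f` over every
`(d+1)`-dimensional flat contained in `A` vanishes. -/
def DegLE {n : ℕ} (f : BF n) (A : Set (Fin n → ZMod 2)) (d : ℕ) : Prop :=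
  ∀ B : Set (Fin n → ZMod 2), IsFlat B (d + 1) → B ⊆ A → flatSum f B = 0

/-- The algebraic degree of the restriction of `f` to `A`. -/
def degOn {n : ℕ} (f : BF n) (A : Set (Fin n → ZMod 2)) : ℕ :=
  sInf {d | DegLE f A d}

/-- `α(f, k)`: the minimal algebraic degree of `f` restricted to a `k`-dimensional flat. -/
def alphaDeg {n : ℕ} (f : BF n) (k : ℕ) : ℕ :=
  sInf {d | ∃ A, IsFlat A k ∧ degOn f A = d}

/-- `g(n, k) = max_f α(f, k)`. -/
def gdeg (n k : ℕ) : ℕ :=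
  sSup {m | ∃ f : BF n, alphaDeg f k = m}

/-- The nonlinearity of the restriction of `f` to `A`: the minimal Hamming distance,
on `A`, from `f` to an affine function. -/
def nlOn {n : ℕ} (f : BF n) (A : Set (Fin n → ZMod 2)) : ℕ :=
  sInf {m | ∃ (a : Fin n → ZMod 2) (c : ZMod 2),
    m = (A.toFinite.toFinset.filter (fun x => f x ≠ (∑ i, a i * x i) + c)).card}

-- basic char-2 facts
lemma z2_add_self : ∀ a : ZMod 2, a + a = 0 := by decide

lemma v2_add_self {n : ℕ} (x : Fin n → ZMod 2) : x + x = 0 := by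
  ext i; exact z2_add_self _

lemma mem_vadd_image {n : ℕ} (W : Submodule (ZMod 2) (Fin n → ZMod 2))
    (v x : Fin n → ZMod 2) :
    x ∈ (fun w => v + w) '' (W : Set (Fin n → ZMod 2)) ↔ x + v ∈ W := by
  constructor
  · rintro ⟨w, hw, rfl⟩
    have : v + w + v = w := by
      rw [add_comm v w, add_assoc, v2_add_self, add_zero]
    rwa [this]
  · intro h
    refine ⟨x + v, h, ?_⟩
    show v + (x + v) = x
    rw [add_comm v (x+v), add_assoc, v2_add_self, add_zero]

lemma flat_ncard {n : ℕ} {A : Set (Fin n → ZMod 2)} {k : ℕ} (h : IsFlat A k) :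
    A.ncard = 2 ^ k := by
  obtain ⟨W, v, hrk, rfl⟩ := h
  rw [Set.ncard_image_of_injective _ (add_right_injective v)]
  have : Set.ncard (W : Set (Fin n → ZMod 2)) = Fintype.card W := by
    rw [Set.ncard_eq_toFinset_card']
    simp [Set.toFinset_card]
  rw [this, Module.card_eq_pow_finrank (K := ZMod 2), ZMod.card, hrk]

lemma flat_eq_of_subset {n : ℕ} {A B : Set (Fin n → ZMod 2)} {k : ℕ}
    (hA : IsFlat A k) (hB : IsFlat B k) (hsub : B ⊆ A) : B = A := by
  exact Set.eq_of_subset_of_ncard_le hsub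
    (by rw [flat_ncard hA, flat_ncard hB]) (Set.toFinite A)

lemma z2_cases : ∀ a : ZMod 2, a = 0 ∨ a = 1 := by decide

abbrev Vn (n : ℕ) := Fin n → ZMod 2

lemma exists_eval {n : ℕ} {φ ψ : Vn n →ₗ[ZMod 2] ZMod 2} (hφ : φ ≠ 0) (hne : ψ ≠ φ) :
    ∃ u, φ u = 1 ∧ ψ u = 0 := by
  by_contra hc
  push_neg at hc
  obtain ⟨u₀, hu₀⟩ : ∃ u₀, φ u₀ = 1 := by
    by_contra h2
    push_neg at h2
    apply hφ
    apply LinearMap.ext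
    intro x
    rcases z2_cases (φ x) with h | h
    · simpa using h
    · exact absurd h (h2 x)
  have hψu₀ : ψ u₀ = 1 := by
    rcases z2_cases (ψ u₀) with h | h
    · exact absurd hu₀ (fun hh => by simpa [h] using hc u₀ hh)
    · exact h
  apply hne
  apply LinearMap.ext
  intro x
  rcases z2_cases (φ x) with h | h
  · have h1 : φ (x + u₀) = 1 := by rw [map_add, h, hu₀, zero_add]
    have h2 : ψ (x + u₀) ≠ 0 := hc _ h1
    rcases z2_cases (ψ (x + u₀)) with h3 | h3
    · exact absurd h3 h2
    · rw [map_add, hψu₀] at h3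
      have : ψ x = 0 := by
        rcases z2_cases (ψ x) with h4 | h4
        · exact h4
        · rw [h4] at h3; exact absurd h3 (by decide)
      rw [this, h]
  · have h2 : ψ x ≠ 0 := hc _ h
    rcases z2_cases (ψ x) with h3 | h3
    · exact absurd h3 h2
    · rw [h3, h]

lemma pair_surjective {n : ℕ} {φ ψ : Vn n →ₗ[ZMod 2] ZMod 2} (hφ : φ ≠ 0) (hψ : ψ ≠ 0)
    (hne : ψ ≠ φ) : Function.Surjective (LinearMap.prod φ ψ) := by
  obtain ⟨u₁, hu₁, hu₁'⟩ := exists_eval hφ hne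
  obtain ⟨u₂, hu₂, hu₂'⟩ := exists_eval hψ (fun h => hne h.symm)
  rintro ⟨c, d⟩
  refine ⟨c • u₁ + d • u₂, ?_⟩
  simp [LinearMap.prod_apply, hu₁, hu₁', hu₂, hu₂', mul_comm]

lemma z2_add_eq_zero : ∀ a b : ZMod 2, a + b = 0 ↔ a = b := by decide

lemma exists_one {n : ℕ} {φ : Vn n →ₗ[ZMod 2] ZMod 2} (hφ : φ ≠ 0) : ∃ u, φ u = 1 := by
  by_contra h2
  push_neg at h2
  apply hφ
  apply LinearMap.ext
  intro x
  rcases z2_cases (φ x) with h | h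
  · simpa using h
  · exact absurd h (h2 x)

lemma finrank_Vn (n : ℕ) : Module.finrank (ZMod 2) (Vn n) = n := by
  simp [Module.finrank_pi]

lemma ker_isFlat_one {n : ℕ} {φ : Vn n →ₗ[ZMod 2] ZMod 2} (hφ : φ ≠ 0) (ε : ZMod 2) :
    IsFlat {x | φ x = ε} (n - 1) := by
  obtain ⟨u, hu⟩ := exists_one hφ
  have hsurj : Function.Surjective φ := by
    intro c; exact ⟨c • u, by simp [hu, mul_comm]⟩
  have hrange : LinearMap.range φ = ⊤ := LinearMap.range_eq_top.mpr hsurj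
  have hrk : Module.finrank (ZMod 2) (LinearMap.ker φ) = n - 1 := by
    have := LinearMap.finrank_range_add_finrank_ker φ
    rw [hrange, finrank_top, finrank_Vn, Module.finrank_self] at this
    omega
  refine ⟨LinearMap.ker φ, ε • u, hrk, ?_⟩
  ext x
  rw [mem_vadd_image, LinearMap.mem_ker, map_add, map_smul, hu, smul_eq_mul, mul_one,
    z2_add_eq_zero]
  exact Iff.rfl

lemma ker_isFlat_two {n : ℕ} {φ ψ : Vn n →ₗ[ZMod 2] ZMod 2} (hφ : φ ≠ 0) (hψ : ψ ≠ 0)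
    (hne : ψ ≠ φ) (ε δ : ZMod 2) :
    IsFlat {x | φ x = ε ∧ ψ x = δ} (n - 2) := by
  have hsurj := pair_surjective hφ hψ hne
  have hrange : LinearMap.range (LinearMap.prod φ ψ) = ⊤ := LinearMap.range_eq_top.mpr hsurj
  have hrk : Module.finrank (ZMod 2) (LinearMap.ker (LinearMap.prod φ ψ)) = n - 2 := by
    have := LinearMap.finrank_range_add_finrank_ker (LinearMap.prod φ ψ)
    rw [hrange, finrank_top, finrank_Vn, Module.finrank_prod, Module.finrank_self] at this
    omega
  obtain ⟨v, hv⟩ := hsurj (ε, δ)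
  have hv1 : φ v = ε := congrArg Prod.fst hv
  have hv2 : ψ v = δ := congrArg Prod.snd hv
  refine ⟨_, v, hrk, ?_⟩
  ext x
  rw [mem_vadd_image, LinearMap.mem_ker]
  have : LinearMap.prod φ ψ (x + v) = (φ x + ε, ψ x + δ) := by
    simp [LinearMap.prod_apply, hv1, hv2]
  rw [this, Prod.mk_eq_zero, z2_add_eq_zero, z2_add_eq_zero]
  exact Iff.rfl

lemma hyperplane_repr {n : ℕ} (hn : 2 ≤ n) {A : Set (Vn n)} (hA : IsFlat A (n - 1)) :
    ∃ (φ : Vn n →ₗ[ZMod 2] ZMod 2) (ε : ZMod 2), φ ≠ 0 ∧ A = {x | φ x = ε} := by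
  obtain ⟨W, v, hrk, rfl⟩ := hA
  have hq : Module.finrank (ZMod 2) (Vn n ⧸ W) = 1 := by
    have := W.finrank_quotient_add_finrank
    rw [finrank_Vn, hrk] at this
    have h2 : Module.finrank (ZMod 2) (Vn n ⧸ W) + (n-1) = n := this
    omega
  have e : (Vn n ⧸ W) ≃ₗ[ZMod 2] ZMod 2 :=
    LinearEquiv.ofFinrankEq _ _ (by rw [hq, Module.finrank_self])
  set φ : Vn n →ₗ[ZMod 2] ZMod 2 := e.toLinearMap ∘ₗ W.mkQ with hφdef
  have hker : LinearMap.ker φ = W := by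
    ext x
    rw [LinearMap.mem_ker, hφdef, LinearMap.comp_apply]
    rw [show (e.toLinearMap (W.mkQ x) = 0) ↔ W.mkQ x = 0 from
      ⟨fun h => e.injective (by simpa using h), fun h => by rw [h]; simp⟩]
    rw [Submodule.mkQ_apply, Submodule.Quotient.mk_eq_zero]
  have hφ : φ ≠ 0 := by
    intro h0
    have : W = ⊤ := by rw [← hker, h0]; exact LinearMap.ker_zero
    rw [this, finrank_top, finrank_Vn] at hrk
    omega
  refine ⟨φ, φ v, hφ, ?_⟩
  ext x
  rw [mem_vadd_image, ← hker, LinearMap.mem_ker, map_add, z2_add_eq_zero]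
  exact Iff.rfl

lemma flatSum_eq_sum_ite {n : ℕ} (f : BF n) (A : Set (Vn n)) :
    flatSum f A = ∑ x : Vn n, if x ∈ A then f x else 0 := by
  rw [flatSum, ← Finset.sum_filter]
  congr 1
  ext x
  simp [Set.Finite.mem_toFinset, Set.mem_setOf_eq]

lemma chi_eq : ∀ a ε : ZMod 2, (1 + a + ε : ZMod 2) = if a = ε then 1 else 0 := by decide

lemma ite_and_chi (a b ε δ c : ZMod 2) (P Q : Prop) [Decidable P] [Decidable Q]
    (hP : P ↔ a = ε) (hQ : Q ↔ b = δ) :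
    (if P ∧ Q then c else 0) = c * (1 + a + ε) * (1 + b + δ) := by
  rw [chi_eq, chi_eq]
  by_cases hp : P <;> by_cases hq : Q
  · simp [hp, hq, hP.mp hp, hQ.mp hq]
  · have hb : ¬ (b = δ) := fun h => hq (hQ.mpr h)
    simp [hp, hq, hb]
  · have ha : ¬ (a = ε) := fun h => hp (hP.mpr h)
    simp [hp, hq, ha]
  · have hb : ¬ (b = δ) := fun h => hq (hQ.mpr h)
    simp [hp, hq, hb]

lemma flatSum_levelset2 {n : ℕ} (f : BF n) (φ ψ : Vn n →ₗ[ZMod 2] ZMod 2) (ε δ : ZMod 2) :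
    flatSum f {x | φ x = ε ∧ ψ x = δ}
      = ∑ x : Vn n, f x * (1 + φ x + ε) * (1 + ψ x + δ) := by
  rw [flatSum_eq_sum_ite]
  apply Finset.sum_congr rfl
  intro x _
  simp only [Set.mem_setOf_eq]
  rw [chi_eq, chi_eq]
  by_cases h1 : φ x = ε <;> by_cases h2 : ψ x = δ <;> simp [h1, h2]

def f0 (n : ℕ) : BF n := fun x => if x = 0 ∨ ∃ i, x = Pi.single i 1 then 1 else 0

lemma single_ne_zero' {n : ℕ} (i : Fin n) : (Pi.single i 1 : Vn n) ≠ 0 := by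
  intro h
  simpa using congrFun h i

lemma single_inj' {n : ℕ} {i j : Fin n} (h : (Pi.single i 1 : Vn n) = Pi.single j 1) : i = j := by
  by_contra hne
  have := congrFun h i
  rw [Pi.single_eq_same, Pi.single_eq_of_ne hne] at this
  exact absurd this (by decide)

lemma sum_f0_mul {n : ℕ} (g : Vn n → ZMod 2) :
    ∑ x : Vn n, f0 n x * g x = g 0 + ∑ i : Fin n, g (Pi.single i 1) := by
  classical
  set T : Finset (Vn n) := insert 0 (Finset.univ.image fun i => (Pi.single i 1 : Vn n)) with hT
  have hmem : ∀ x : Vn n, (x = 0 ∨ ∃ i, x = Pi.single i 1) ↔ x ∈ T := by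
    intro x
    simp [hT, eq_comm]
  have h1 : ∀ x : Vn n, f0 n x * g x = if x ∈ T then g x else 0 := by
    intro x
    rw [f0]
    by_cases h : x = 0 ∨ ∃ i, x = Pi.single i 1
    · rw [if_pos h, if_pos ((hmem x).mp h), one_mul]
    · rw [if_neg h, if_neg (fun hh => h ((hmem x).mpr hh)), zero_mul]
  simp_rw [h1]
  rw [Finset.sum_ite_mem, Finset.univ_inter, hT]
  have h0 : (0 : Vn n) ∉ Finset.univ.image (fun i => (Pi.single i 1 : Vn n)) := by
    simp only [Finset.mem_image, Finset.mem_univ, true_and, not_exists]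
    exact fun i h => single_ne_zero' i h
  rw [Finset.sum_insert h0]
  rw [Finset.sum_image (fun i _ j _ h => single_inj' h)]

lemma exists_coord_one {n : ℕ} {φ : Vn n →ₗ[ZMod 2] ZMod 2} (hφ : φ ≠ 0) :
    ∃ k, φ (Pi.single k 1) = 1 := by
  by_contra h
  push_neg at h
  have h0 : ∀ k, φ (Pi.single k 1) = 0 := by
    intro k
    rcases z2_cases (φ (Pi.single k 1)) with hh | hh
    · exact hh
    · exact absurd hh (h k)
  apply hφ
  apply LinearMap.ext
  intro x
  have hx : x = ∑ i, Pi.single i (x i) := (Finset.univ_sum_single x).symm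
  rw [hx, map_sum]
  have : ∀ i, φ (Pi.single i (x i)) = 0 := by
    intro i
    have : (Pi.single i (x i) : Vn n) = x i • Pi.single i 1 := by
      rw [← Pi.single_smul, smul_eq_mul, mul_one]
    rw [this, map_smul, h0 i, smul_zero]
  simp [this]

lemma proj_single {n : ℕ} (k i : Fin n) :
    (LinearMap.proj k : Vn n →ₗ[ZMod 2] ZMod 2) (Pi.single i 1) = if k = i then 1 else 0 := by
  simp [LinearMap.proj_apply, Pi.single_apply, eq_comm]

lemma key_witness {n : ℕ} (hn : 2 ≤ n) {φ : Vn n →ₗ[ZMod 2] ZMod 2} (hφ : φ ≠ 0) (ε : ZMod 2) :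
    ∃ (ψ : Vn n →ₗ[ZMod 2] ZMod 2) (δ : ZMod 2), ψ ≠ 0 ∧ ψ ≠ φ ∧
      flatSum (f0 n) {x | φ x = ε ∧ ψ x = δ} = 1 := by
  have hS : ∀ (ψ : Vn n →ₗ[ZMod 2] ZMod 2) (δ : ZMod 2),
      flatSum (f0 n) {x | φ x = ε ∧ ψ x = δ}
        = (1 + ε) * (1 + δ)
          + ∑ i, (1 + φ (Pi.single i 1) + ε) * (1 + ψ (Pi.single i 1) + δ) := by
    intro ψ δ
    rw [flatSum_levelset2]
    simp_rw [mul_assoc]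
    rw [sum_f0_mul (fun x => (1 + φ x + ε) * (1 + ψ x + δ))]
    simp only [map_zero, add_zero]
  obtain ⟨i0, i1, hne01⟩ : ∃ i0 i1 : Fin n, i0 ≠ i1 :=
    ⟨⟨0, by omega⟩, ⟨1, by omega⟩, by simp [Fin.ext_iff]⟩
  rcases z2_cases ε with rfl | rfl
  · by_cases hall : ∀ i, φ (Pi.single i 1) = 1
    · -- ψ = proj i0, δ = 0
      refine ⟨LinearMap.proj i0, 0, ?_, ?_, ?_⟩
      · intro h
        simpa using LinearMap.congr_fun h (Pi.single i0 1)
      · intro h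
        have := LinearMap.congr_fun h (Pi.single i1 1)
        rw [proj_single, hall i1] at this
        rw [if_neg hne01] at this
        exact absurd this (by decide)
      · rw [hS]
        have hz : ∀ i, (1 + φ (Pi.single i 1) + 0)
            * (1 + (LinearMap.proj i0 : Vn n →ₗ[ZMod 2] ZMod 2) (Pi.single i 1) + 0) = 0 := by
          intro i
          rw [hall i, show (1 + 1 + 0 : ZMod 2) = 0 by decide, zero_mul]
        rw [Finset.sum_congr rfl (fun i _ => hz i), Finset.sum_const_zero]
        decide
    · push_neg at hall
      obtain ⟨k, hk⟩ := hall
      have hk0 : φ (Pi.single k 1) = 0 := by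
        rcases z2_cases (φ (Pi.single k 1)) with hh | hh
        · exact hh
        · exact absurd hh hk
      refine ⟨LinearMap.proj k, 1, ?_, ?_, ?_⟩
      · intro h
        simpa using LinearMap.congr_fun h (Pi.single k 1)
      · intro h
        have := LinearMap.congr_fun h (Pi.single k 1)
        rw [proj_single, if_pos rfl, hk0] at this
        exact absurd this (by decide)
      · rw [hS]
        have hz : ∀ i, (1 + φ (Pi.single i 1) + 0)
            * (1 + (LinearMap.proj k : Vn n →ₗ[ZMod 2] ZMod 2) (Pi.single i 1) + 1)
            = if k = i then 1 + φ (Pi.single i 1) else 0 := by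
          intro i
          rw [proj_single]
          by_cases h : k = i
          · rw [if_pos h, if_pos h, show (1 + 1 + 1 : ZMod 2) = 1 by decide, add_zero, mul_one]
          · rw [if_neg h, if_neg h, show (1 + 0 + 1 : ZMod 2) = 0 by decide, mul_zero]
        rw [Finset.sum_congr rfl (fun i _ => hz i), Finset.sum_ite_eq, if_pos (Finset.mem_univ k),
          hk0]
        decide
  · obtain ⟨k, hk⟩ := exists_coord_one hφ
    by_cases hex : ∃ j, j ≠ k ∧ φ (Pi.single j 1) = 1
    · obtain ⟨j, hjk, hj⟩ := hex
      refine ⟨LinearMap.proj k, 1, ?_, ?_, ?_⟩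
      · intro h
        simpa using LinearMap.congr_fun h (Pi.single k 1)
      · intro h
        have := LinearMap.congr_fun h (Pi.single j 1)
        rw [proj_single, if_neg (fun hh => hjk hh.symm), hj] at this
        exact absurd this (by decide)
      · rw [hS]
        have hz : ∀ i, (1 + φ (Pi.single i 1) + 1)
            * (1 + (LinearMap.proj k : Vn n →ₗ[ZMod 2] ZMod 2) (Pi.single i 1) + 1)
            = if k = i then φ (Pi.single i 1) else 0 := by
          intro i
          rw [proj_single]
          by_cases h : k = i
          · rw [if_pos h, if_pos h, show (1 + 1 + 1 : ZMod 2) = 1 by decide, mul_one,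
              show ∀ a : ZMod 2, 1 + a + 1 = a from by decide]
          · rw [if_neg h, if_neg h, show (1 + 0 + 1 : ZMod 2) = 0 by decide, mul_zero]
        rw [Finset.sum_congr rfl (fun i _ => hz i), Finset.sum_ite_eq, if_pos (Finset.mem_univ k),
          hk]
        decide
    · push_neg at hex
      -- all coords other than k are 0; pick j0 ≠ k
      have hex0 : ∀ j, j ≠ k → φ (Pi.single j 1) = 0 := by
        intro j hj
        rcases z2_cases (φ (Pi.single j 1)) with hh | hh
        · exact hh
        · exact absurd hh (hex j hj)
      obtain ⟨j0, hj0⟩ : ∃ j0 : Fin n, j0 ≠ k := by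
        by_cases h : k = ⟨0, by omega⟩
        · exact ⟨⟨1, by omega⟩, by rw [h]; simp [Fin.ext_iff]⟩
        · exact ⟨⟨0, by omega⟩, fun hh => h hh.symm⟩
      refine ⟨((LinearMap.proj k : Vn n →ₗ[ZMod 2] ZMod 2) + (LinearMap.proj j0 : Vn n →ₗ[ZMod 2] ZMod 2)), 1, ?_, ?_, ?_⟩
      · intro h
        have := LinearMap.congr_fun h (Pi.single j0 1)
        rw [LinearMap.add_apply, proj_single, proj_single, if_neg (fun hh => hj0 hh.symm),
          if_pos rfl] at this
        simp only [LinearMap.zero_apply] at this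
        exact absurd this (by decide)
      · intro h
        have := LinearMap.congr_fun h (Pi.single j0 1)
        rw [LinearMap.add_apply, proj_single, proj_single, if_neg (fun hh => hj0 hh.symm),
          if_pos rfl, hex0 j0 hj0] at this
        exact absurd this (by decide)
      · rw [hS]
        have hz : ∀ i, (1 + φ (Pi.single i 1) + 1)
            * (1 + ((LinearMap.proj k : Vn n →ₗ[ZMod 2] ZMod 2) + (LinearMap.proj j0 : Vn n →ₗ[ZMod 2] ZMod 2))
                (Pi.single i 1) + 1)
            = (if k = i then φ (Pi.single i 1) else 0)
              + (if j0 = i then φ (Pi.single i 1) else 0) := by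
          intro i
          rw [LinearMap.add_apply, proj_single, proj_single,
            show ∀ a : ZMod 2, 1 + a + 1 = a from by decide,
            show ∀ a : ZMod 2, 1 + a + 1 = a from by decide]
          by_cases h1 : k = i
          · by_cases h2 : j0 = i
            · exact absurd (h2.trans h1.symm) hj0
            · simp [h1, h2]
          · by_cases h2 : j0 = i
            · simp [h1, h2]
            · simp [h1, h2]
        rw [Finset.sum_congr rfl (fun i _ => hz i), Finset.sum_add_distrib,
          Finset.sum_ite_eq, Finset.sum_ite_eq, if_pos (Finset.mem_univ k),
          if_pos (Finset.mem_univ j0), hk, hex0 j0 hj0]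
        decide

lemma flatSum_levelset1 {n : ℕ} (f : BF n) (φ : Vn n →ₗ[ZMod 2] ZMod 2) (ε : ZMod 2) :
    flatSum f {x | φ x = ε} = ∑ x : Vn n, f x * (1 + φ x + ε) := by
  rw [flatSum_eq_sum_ite]
  apply Finset.sum_congr rfl
  intro x _
  simp only [Set.mem_setOf_eq]
  rw [chi_eq]
  by_cases h1 : φ x = ε <;> simp [h1]

lemma exists_hyperplane_sum_zero {n : ℕ} (hn : 2 ≤ n) (f : BF n) :
    ∃ A : Set (Vn n), IsFlat A (n - 1) ∧ flatSum f A = 0 := by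
  obtain ⟨i0, i1, hne01⟩ : ∃ i0 i1 : Fin n, i0 ≠ i1 :=
    ⟨⟨0, by omega⟩, ⟨1, by omega⟩, by simp [Fin.ext_iff]⟩
  set φ0 : Vn n →ₗ[ZMod 2] ZMod 2 := LinearMap.proj i0 with hφ0def
  set φ1 : Vn n →ₗ[ZMod 2] ZMod 2 := LinearMap.proj i1 with hφ1def
  have hφ0 : φ0 ≠ 0 := by
    intro h
    have := LinearMap.congr_fun h (Pi.single i0 1)
    rw [hφ0def, proj_single, if_pos rfl, LinearMap.zero_apply] at this
    exact absurd this (by decide)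
  have hφ1 : φ1 ≠ 0 := by
    intro h
    have := LinearMap.congr_fun h (Pi.single i1 1)
    rw [hφ1def, proj_single, if_pos rfl, LinearMap.zero_apply] at this
    exact absurd this (by decide)
  have hφ2 : φ0 + φ1 ≠ 0 := by
    intro h
    have := LinearMap.congr_fun h (Pi.single i0 1)
    rw [LinearMap.add_apply, LinearMap.zero_apply, hφ0def, hφ1def, proj_single, proj_single,
      if_pos rfl, if_neg (fun hh => hne01 hh.symm)] at this
    exact absurd this (by decide)
  by_contra hcon
  push_neg at hcon
  have hone : ∀ (φ : Vn n →ₗ[ZMod 2] ZMod 2), φ ≠ 0 → flatSum f {x | φ x = 1} = 1 := by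
    intro φ hφ
    rcases z2_cases (flatSum f {x | φ x = 1}) with h | h
    · exact absurd h (hcon _ (ker_isFlat_one hφ 1))
    · exact h
  have hsum : flatSum f {x | φ0 x = 1} + flatSum f {x | φ1 x = 1}
      + flatSum f {x | (φ0 + φ1) x = 1} = 0 := by
    rw [flatSum_levelset1, flatSum_levelset1, flatSum_levelset1, ← Finset.sum_add_distrib,
      ← Finset.sum_add_distrib]
    apply Finset.sum_eq_zero
    intro x _
    rw [LinearMap.add_apply]
    exact (show ∀ a b c : ZMod 2, c * (1+a+1) + c * (1+b+1) + c * (1+(a+b)+1) = 0 by decide)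
      (φ0 x) (φ1 x) (f x)
  rw [hone φ0 hφ0, hone φ1 hφ1, hone _ hφ2] at hsum
  exact absurd hsum (by decide)

lemma flatSum_union_disjoint {n : ℕ} (f : BF n) {B₁ B₂ : Set (Vn n)} (h : Disjoint B₁ B₂) :
    flatSum f (B₁ ∪ B₂) = flatSum f B₁ + flatSum f B₂ := by
  rw [flatSum, flatSum, flatSum]
  rw [show (B₁ ∪ B₂).toFinite.toFinset = B₁.toFinite.toFinset ∪ B₂.toFinite.toFinset from by
    ext x
    rw [Set.Finite.mem_toFinset, Finset.mem_union, Set.Finite.mem_toFinset,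
      Set.Finite.mem_toFinset]
    exact Set.mem_union x B₁ B₂]
  exact Finset.sum_union (by
    rw [Finset.disjoint_left]
    intro x h1 h2
    rw [Set.Finite.mem_toFinset] at h1 h2
    exact Set.disjoint_left.mp h h1 h2)

lemma flat_split {n : ℕ} {B : Set (Vn n)} {d : ℕ} (hB : IsFlat B (d + 1)) :
    ∃ B₁ B₂ : Set (Vn n), IsFlat B₁ d ∧ IsFlat B₂ d ∧ B₁ ⊆ B ∧ B₂ ⊆ B ∧
      Disjoint B₁ B₂ ∧ B = B₁ ∪ B₂ := by
  obtain ⟨W, v, hrk, rfl⟩ := hB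
  have hW : W ≠ ⊥ := by
    intro h
    rw [h, finrank_bot] at hrk
    omega
  obtain ⟨u, huW, hu0⟩ := Submodule.exists_mem_ne_zero_of_ne_bot hW
  set uW : W := ⟨u, huW⟩ with huWdef
  have huW0 : uW ≠ 0 := by
    intro h
    exact hu0 (congrArg Subtype.val h)
  set U : Submodule (ZMod 2) W := Submodule.span (ZMod 2) {uW} with hUdef
  obtain ⟨U', hcompl⟩ := Submodule.exists_isCompl U
  have hrkU : Module.finrank (ZMod 2) U = 1 := finrank_span_singleton huW0
  have hrkU' : Module.finrank (ZMod 2) U' = d := by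
    have := Submodule.finrank_add_eq_of_isCompl hcompl
    rw [hrkU, hrk] at this
    omega
  set W' : Submodule (ZMod 2) (Vn n) := U'.map W.subtype with hW'def
  have hrkW' : Module.finrank (ZMod 2) W' = d := by
    rw [hW'def, Submodule.finrank_map_subtype_eq]
    exact hrkU'
  refine ⟨(fun w => v + w) '' W', (fun w => (v + u) + w) '' W', ⟨W', v, hrkW', rfl⟩,
    ⟨W', v + u, hrkW', rfl⟩, ?_, ?_, ?_, ?_⟩
  · rintro x ⟨w, hw, rfl⟩
    obtain ⟨z, hz, rfl⟩ := hw
    exact ⟨(z : Vn n), z.2, rfl⟩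
  · rintro x ⟨w, hw, rfl⟩
    obtain ⟨z, hz, rfl⟩ := hw
    refine ⟨u + (z : Vn n), W.add_mem huW z.2, ?_⟩
    show v + (u + (z : Vn n)) = v + u + (z : Vn n)
    rw [add_assoc]
  · rw [Set.disjoint_left]
    rintro x ⟨w1, hw1, rfl⟩ ⟨w2, hw2, he⟩
    have hw12 : w1 = u + w2 := by
      have he' : v + u + w2 = v + w1 := he
      rw [add_assoc] at he'
      exact (add_left_cancel he').symm
    have huw : u = w1 + w2 := by
      rw [hw12, add_assoc, v2_add_self, add_zero]
    have huW' : u ∈ W' := by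
      rw [huw]
      exact W'.add_mem hw1 hw2
    obtain ⟨z, hz, hzu⟩ := huW'
    have hzuW : z = uW := Subtype.ext hzu
    rw [hzuW] at hz
    have : uW ∈ U ⊓ U' := ⟨Submodule.mem_span_singleton_self uW, hz⟩
    rw [hcompl.inf_eq_bot] at this
    exact huW0 this
  · ext x
    constructor
    · rintro ⟨w, hw, rfl⟩
      have : (⟨w, hw⟩ : W) ∈ U ⊔ U' := by rw [hcompl.sup_eq_top]; trivial
      obtain ⟨y, hy, z, hz, hyz⟩ := Submodule.mem_sup.mp this
      obtain ⟨c, hc⟩ := Submodule.mem_span_singleton.mp hy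
      rcases z2_cases c with rfl | rfl
      · left
        have hwz : w = (z : Vn n) := by
          have := congrArg Subtype.val hyz
          rw [← hc] at this
          simpa using this.symm
        exact ⟨(z : Vn n), ⟨z, hz, rfl⟩, by rw [hwz]⟩
      · right
        have hwz : w = u + (z : Vn n) := by
          have := congrArg Subtype.val hyz
          rw [← hc] at this
          simpa [huWdef] using this.symm
        refine ⟨(z : Vn n), ⟨z, hz, rfl⟩, ?_⟩
        show v + u + (z : Vn n) = v + w
        rw [hwz, ← add_assoc]
    · rintro (⟨w, hw, rfl⟩ | ⟨w, hw, rfl⟩)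
      · obtain ⟨z, hz, rfl⟩ := hw
        exact ⟨(z : Vn n), z.2, rfl⟩
      · obtain ⟨z, hz, rfl⟩ := hw
        refine ⟨u + (z : Vn n), W.add_mem huW z.2, ?_⟩
        show v + (u + (z : Vn n)) = v + u + (z : Vn n)
        rw [add_assoc]


lemma degLE_mono {n : ℕ} {f : BF n} {A : Set (Vn n)} {d e : ℕ} (hde : d ≤ e)
    (h : DegLE f A d) : DegLE f A e := by
  induction e, hde using Nat.le_induction with
  | base => exact h
  | succ e _ ih =>
    intro B hB hsub
    obtain ⟨B₁, B₂, h1, h2, hs1, hs2, hdisj, rfl⟩ := flat_split hB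
    rw [flatSum_union_disjoint f hdisj, ih B₁ h1 (fun x hx => hsub (Set.mem_union_left _ hx)),
      ih B₂ h2 (fun x hx => hsub (Set.mem_union_right _ hx)), add_zero]

lemma degLE_top {n : ℕ} (hn : 1 ≤ n) {f : BF n} {A : Set (Vn n)} (hA : IsFlat A (n - 1)) :
    DegLE f A (n - 1) := by
  intro B hB hsub
  exfalso
  have hn1 : n - 1 + 1 = n := by omega
  rw [hn1] at hB
  have hBcard : B.ncard = 2 ^ n := flat_ncard hB
  have hAcard : A.ncard = 2 ^ (n - 1) := flat_ncard hA
  have hle : B.ncard ≤ A.ncard := Set.ncard_le_ncard hsub (Set.toFinite A)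
  rw [hBcard, hAcard] at hle
  have : (2 : ℕ) ^ (n - 1) < 2 ^ n := Nat.pow_lt_pow_right (by norm_num) (by omega)
  omega

lemma degLE_of_sum_zero {n : ℕ} (hn : 2 ≤ n) {f : BF n} {A : Set (Vn n)}
    (hA : IsFlat A (n - 1)) (h0 : flatSum f A = 0) : DegLE f A (n - 2) := by
  intro B hB hsub
  have h1 : n - 2 + 1 = n - 1 := by omega
  rw [h1] at hB
  rw [flat_eq_of_subset hA hB hsub]
  exact h0

lemma alpha_le {n : ℕ} (hn : 2 ≤ n) (f : BF n) : alphaDeg f (n - 1) ≤ n - 2 := by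
  obtain ⟨A, hA, h0⟩ := exists_hyperplane_sum_zero hn f
  refine le_trans (Nat.sInf_le ⟨A, hA, rfl⟩) ?_
  exact Nat.sInf_le (degLE_of_sum_zero hn hA h0)

lemma degOn_f0_ge {n : ℕ} (hn : 2 ≤ n) {A : Set (Vn n)} (hA : IsFlat A (n - 1)) :
    n - 2 ≤ degOn (f0 n) A := by
  unfold degOn
  refine le_csInf ⟨n - 1, ?_⟩ ?_
  · show DegLE (f0 n) A (n - 1)
    exact degLE_top (by omega) hA
  intro d hd
  replace hd : DegLE (f0 n) A d := hd
  by_contra hlt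
  push_neg at hlt
  have h3 : DegLE (f0 n) A (n - 3) := degLE_mono (by omega) hd
  obtain ⟨φ, ε, hφ, rfl⟩ := hyperplane_repr hn hA
  obtain ⟨ψ, δ, hψ0, hψφ, hsum1⟩ := key_witness hn hφ ε
  have hflat := ker_isFlat_two hφ hψ0 hψφ ε δ
  have h32 : n - 3 + 1 = n - 2 := by omega
  have := h3 {x | φ x = ε ∧ ψ x = δ} (by rw [h32]; exact hflat) (fun x hx => hx.1)
  rw [hsum1] at this
  exact absurd this (by decide)

lemma alpha_f0 {n : ℕ} (hn : 2 ≤ n) : alphaDeg (f0 n) (n - 1) = n - 2 := by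
  refine le_antisymm (alpha_le hn _) ?_
  obtain ⟨A, hA, _⟩ := exists_hyperplane_sum_zero hn (f0 n)
  unfold alphaDeg
  refine le_csInf ⟨degOn (f0 n) A, ?_⟩ ?_
  · show ∃ A', IsFlat A' (n - 1) ∧ degOn (f0 n) A' = degOn (f0 n) A
    exact ⟨A, hA, rfl⟩
  rintro d ⟨A', hA', rfl⟩
  exact degOn_f0_ge hn hA'

/-- For `n ≥ 2`, `g(n, n-1) = n - 2`. -/
theorem stmt3 {n : ℕ} (hn : 2 ≤ n) : gdeg n (n - 1) = n - 2 := by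
  unfold gdeg
  have hub : ∀ m ∈ {m | ∃ f : BF n, alphaDeg f (n - 1) = m}, m ≤ n - 2 := by
    rintro m ⟨f, rfl⟩
    exact alpha_le hn f
  have hmem : n - 2 ∈ {m | ∃ f : BF n, alphaDeg f (n - 1) = m} := ⟨f0 n, alpha_f0 hn⟩
  exact le_antisymm (csSup_le ⟨n - 2, hmem⟩ hub) (le_csSup ⟨n - 2, hub⟩ hmem)
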